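/- Every generalised e-merging function is dominated pointwise by a componentwise non-decreasing e-merging function. Concretely, if F : [0,∞)^K → [0,∞) is Borel measurable and F(E_1,…,E_K) is an e-variable for every tuple of e-variables, then there is a componentwise non-decreasing G : [0,∞)^K → [0,∞) with the same e-merging property such that F(u) ≤ G(u) for all u ∈ [0,∞)^K (G can be taken affine). -/

import Mathlib

open BigOperators MeasureTheory

lemma star_lemma (K : ℕ) (F : (Fin K → ℝ) → ℝ)
    (hF0 : ∀ u : Fin K → ℝ, (∀ k, 0 ≤ u k) → 0 ≤ F u)
    (hmerge : ∀ (X : Type) (_ : MeasurableSpace X) (Q : Measure X),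
      IsProbabilityMeasure Q →
      ∀ E : Fin K → X → ℝ, (∀ k, Measurable (E k)) → (∀ k x, 0 ≤ E k x) →
      (∀ k, ∫⁻ x, ENNReal.ofReal (E k x) ∂Q ≤ 1) →
      ∫⁻ x, ENNReal.ofReal (F (fun k => E k x)) ∂Q ≤ 1)
    (n : ℕ) (p : Fin n → ℝ) (hp0 : ∀ i, 0 ≤ p i) (hp1 : ∑ i, p i = 1)
    (u : Fin n → Fin K → ℝ) (hu : ∀ i k, 0 ≤ u i k)
    (M : ℝ) (hM1 : 1 ≤ M) (hMk : ∀ k, (∑ i, p i * u i k) ≤ M) :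
    (∑ i, p i * F (u i)) ≤ M := by
  have hM0 : 0 < M := lt_of_lt_of_le one_pos hM1
  have hinv0 : (0:ℝ) ≤ 1 - 1/M := by
    have : 1/M ≤ 1 := by rw [div_le_one hM0]; exact hM1
    linarith
  letI : MeasurableSpace (Option (Fin n)) := ⊤
  set Q : Measure (Option (Fin n)) :=
    (∑ i : Fin n, (ENNReal.ofReal (p i / M)) • (Measure.dirac (some i)))
      + (ENNReal.ofReal (1 - 1/M)) • (Measure.dirac none) with hQ
  have hmeas : ∀ {β : Type} [MeasurableSpace β] (f : Option (Fin n) → β),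
      Measurable f := by
    intro β _ f
    exact fun s _ => trivial
  have hlint : ∀ f : Option (Fin n) → ENNReal,
      ∫⁻ x, f x ∂Q
        = (∑ i : Fin n, ENNReal.ofReal (p i / M) * f (some i))
          + ENNReal.ofReal (1 - 1/M) * f none := by
    intro f
    rw [hQ, lintegral_add_measure, lintegral_smul_measure,
      lintegral_finset_sum_measure]
    rw [lintegral_dirac' _ (hmeas f)]
    congr 1
    refine Finset.sum_congr rfl (fun i _ => ?_)
    rw [lintegral_smul_measure, lintegral_dirac' _ (hmeas f), smul_eq_mul]
  have hprob : IsProbabilityMeasure Q := by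
    constructor
    rw [← MeasureTheory.lintegral_one (μ := Q), hlint]
    simp only [mul_one]
    rw [← ENNReal.ofReal_sum_of_nonneg (fun i _ => div_nonneg (hp0 i) hM0.le),
      ← ENNReal.ofReal_add (Finset.sum_nonneg fun i _ => div_nonneg (hp0 i) hM0.le) hinv0, ← Finset.sum_div, hp1]
    rw [show (1:ℝ)/M + (1 - 1/M) = 1 by ring, ENNReal.ofReal_one]
  set E : Fin K → Option (Fin n) → ℝ := fun k x => x.elim 0 (fun i => u i k) with hE
  have key := hmerge (Option (Fin n)) _ Q hprob E (fun k => hmeas _)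
    (fun k x => by cases x <;> simp [hE] <;> exact hu _ _)
    (by
      intro k
      rw [hlint]
      simp only [hE, Option.elim]
      rw [ENNReal.ofReal_zero, mul_zero, add_zero]
      have : ∀ i : Fin n, ENNReal.ofReal (p i / M) * ENNReal.ofReal (u i k)
          = ENNReal.ofReal (p i * u i k / M) := by
        intro i
        rw [← ENNReal.ofReal_mul (div_nonneg (hp0 i) hM0.le)]
        ring_nf
      simp_rw [this]
      rw [← ENNReal.ofReal_sum_of_nonneg
        (fun i _ => div_nonneg (mul_nonneg (hp0 i) (hu i k)) hM0.le)]
      rw [← Finset.sum_div]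
      calc ENNReal.ofReal ((∑ i, p i * u i k) / M) ≤ ENNReal.ofReal 1 := by
            apply ENNReal.ofReal_le_ofReal
            rw [div_le_one hM0]; exact hMk k
        _ = 1 := ENNReal.ofReal_one)
  rw [hlint] at key
  have hdrop : (∑ i : Fin n, ENNReal.ofReal (p i / M)
      * ENNReal.ofReal (F (fun k => E k (some i)))) ≤ 1 :=
    le_trans (le_add_right le_rfl) key
  have hEi : ∀ i, (fun k => E k (some i)) = u i := by
    intro i; funext k; simp [hE]
  simp_rw [hEi] at hdrop
  have : ∀ i : Fin n, ENNReal.ofReal (p i / M) * ENNReal.ofReal (F (u i))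
      = ENNReal.ofReal (p i * F (u i) / M) := by
    intro i
    rw [← ENNReal.ofReal_mul (div_nonneg (hp0 i) hM0.le)]
    ring_nf
  simp_rw [this] at hdrop
  rw [← ENNReal.ofReal_sum_of_nonneg
    (fun i _ => div_nonneg (mul_nonneg (hp0 i) (hF0 _ (hu i))) hM0.le),
    ← Finset.sum_div, ← ENNReal.ofReal_one] at hdrop
  have := (ENNReal.ofReal_le_ofReal_iff (by norm_num)).mp hdrop
  rw [div_le_one hM0] at this
  linarith

lemma finite_feas (K : ℕ) (F : (Fin K → ℝ) → ℝ) (hK : 1 ≤ K)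
    (hstar : ∀ (n : ℕ) (p : Fin n → ℝ), (∀ i, 0 ≤ p i) → (∑ i, p i = 1) →
      ∀ (u : Fin n → Fin K → ℝ), (∀ i k, 0 ≤ u i k) →
      ∀ (M : ℝ), 1 ≤ M → (∀ k, (∑ i, p i * u i k) ≤ M) →
      (∑ i, p i * F (u i)) ≤ M)
    (n : ℕ) (u : Fin n → Fin K → ℝ) (hu : ∀ i k, 0 ≤ u i k) :
    ∃ ρ ∈ stdSimplex ℝ (Option (Option (Fin K))),
      ∀ i, F (u i) ≤ ρ (some none) + ∑ k, ρ (some (some k)) * u i k := by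
  haveI : Nonempty (Fin K) := ⟨⟨0, hK⟩⟩
  by_contra hcon
  push_neg at hcon
  set T : (Option (Option (Fin K)) → ℝ) → (Fin n → ℝ) :=
    fun ρ i => ρ (some none) + (∑ k, ρ (some (some k)) * u i k) - F (u i) with hT
  have hTcont : Continuous T := by
    refine continuous_pi fun i => Continuous.sub ?_ continuous_const
    exact (continuous_apply (some none)).add
      (continuous_finset_sum Finset.univ fun k _ =>
        (continuous_apply (some (some k))).mul continuous_const)
  set s : Set (Fin n → ℝ) := T '' stdSimplex ℝ (Option (Option (Fin K))) with hs
  have hscvx : Convex ℝ s := by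
    rintro x ⟨ρ1, hρ1, rfl⟩ y ⟨ρ2, hρ2, rfl⟩ a b ha hb hab
    refine ⟨a • ρ1 + b • ρ2, (convex_stdSimplex ℝ _) hρ1 hρ2 ha hb hab, ?_⟩
    funext i
    simp only [hT, Pi.add_apply, Pi.smul_apply, smul_eq_mul]
    have hsum : ∑ k, (a * ρ1 (some (some k)) + b * ρ2 (some (some k))) * u i k
        = a * (∑ k, ρ1 (some (some k)) * u i k) + b * (∑ k, ρ2 (some (some k)) * u i k) := by
      rw [Finset.mul_sum, Finset.mul_sum, ← Finset.sum_add_distrib]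
      exact Finset.sum_congr rfl fun k _ => by ring
    rw [hsum]
    linear_combination (F (u i)) * hab
  have hscpt : IsCompact s := (isCompact_stdSimplex _ _).image hTcont
  set t : Set (Fin n → ℝ) := {x | ∀ i, 0 ≤ x i} with ht
  have htcvx : Convex ℝ t := by
    intro x hx y hy a b ha hb hab i
    simpa using add_nonneg (mul_nonneg ha (hx i)) (mul_nonneg hb (hy i))
  have htcl : IsClosed t := by
    have : t = ⋂ i, {x : Fin n → ℝ | 0 ≤ x i} := by ext x; simp [ht]
    rw [this]
    exact isClosed_iInter fun i => isClosed_le continuous_const (continuous_apply i)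
  have hdisj : Disjoint s t := by
    rw [Set.disjoint_left]
    rintro x ⟨ρ, hρ, rfl⟩ hxt
    obtain ⟨i, hi⟩ := hcon ρ hρ
    have := hxt i
    simp only [hT, Set.mem_setOf_eq] at this
    linarith
  obtain ⟨f, a, b, hfs, hab, hft⟩ :=
    geometric_hahn_banach_compact_closed hscvx hscpt htcvx htcl hdisj
  have hb0 : b < 0 := by
    have h0 : (0 : Fin n → ℝ) ∈ t := fun i => le_rfl
    have := hft 0 h0
    simpa using this
  set e : Fin n → (Fin n → ℝ) := fun i j => if i = j then 1 else 0 with he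
  set q : Fin n → ℝ := fun i => f (e i) with hq
  have hfx : ∀ x : Fin n → ℝ, f x = ∑ i, x i * q i := by
    intro x
    conv_lhs => rw [pi_eq_sum_univ x]
    rw [map_sum]
    refine Finset.sum_congr rfl fun i _ => ?_
    rw [f.map_smul, smul_eq_mul]
  have hq0 : ∀ i, 0 ≤ q i := by
    intro i
    by_contra hqi
    push_neg at hqi
    have hc : 0 < (b - 1) / q i := div_pos_of_neg_of_neg (by linarith) hqi
    have hmem : ((b - 1) / q i) • e i ∈ t := by
      intro j
      simp only [Pi.smul_apply, he, smul_eq_mul]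
      by_cases h : i = j
      · subst h; simpa using hc.le
      · simp [h]
    have := hft _ hmem
    rw [f.map_smul, smul_eq_mul] at this
    have h3 : f (e i) = q i := rfl
    rw [h3, div_mul_cancel₀ _ (ne_of_lt hqi)] at this
    linarith
  have hρmem : ∀ w : Option (Option (Fin K)),
      (fun w' => if w = w' then (1:ℝ) else 0) ∈ stdSimplex ℝ (Option (Option (Fin K))) :=
    fun w => ite_eq_mem_stdSimplex ℝ w
  have hneg : ∀ ρ ∈ stdSimplex ℝ (Option (Option (Fin K))), ∑ i, T ρ i * q i < 0 := by
    intro ρ hρ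
    have := hfs _ ⟨ρ, hρ, rfl⟩
    rw [hfx] at this
    linarith
  set S : ℝ := ∑ i, q i with hS
  have hS0 : 0 < S := by
    rcases lt_or_eq_of_le (Finset.sum_nonneg fun i _ => hq0 i) with h | h
    · exact h
    · exfalso
      have hz : ∀ i, q i = 0 := fun i =>
        (Finset.sum_eq_zero_iff_of_nonneg (fun i _ => hq0 i)).mp h.symm i (Finset.mem_univ i)
      have := hneg _ (hρmem none)
      simp [hz] at this
  set p : Fin n → ℝ := fun i => q i / S with hp
  have hp0 : ∀ i, 0 ≤ p i := fun i => div_nonneg (hq0 i) hS0.le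
  have hp1 : ∑ i, p i = 1 := by
    simp only [hp]
    rw [← Finset.sum_div, ← hS, div_self hS0.ne']
  -- vertex computations
  have hTvb : ∀ i, T (fun w' => if (some none : Option (Option (Fin K))) = w' then 1 else 0) i
      = 1 - F (u i) := by
    intro i; simp [hT]
  have hTvk : ∀ (k : Fin K) i,
      T (fun w' => if (some (some k) : Option (Option (Fin K))) = w' then 1 else 0) i
      = u i k - F (u i) := by
    intro k i
    simp [hT, ite_mul]
  have hvb : ∑ i, (1 - F (u i)) * q i < 0 := by
    have := hneg _ (hρmem (some none))
    simpa only [hTvb] using this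
  have hvk : ∀ k : Fin K, ∑ i, (u i k - F (u i)) * q i < 0 := by
    intro k
    have := hneg _ (hρmem (some (some k)))
    simpa only [hTvk] using this
  set A : ℝ := ∑ i, p i * F (u i) with hA
  have hqF : ∀ i, p i * F (u i) = (q i * F (u i)) / S := by
    intro i; rw [hp]; ring
  have hA1 : 1 < A := by
    have h1 : S < ∑ i, q i * F (u i) := by
      have hdist : ∑ i, (1 - F (u i)) * q i = S - ∑ i, q i * F (u i) := by
        rw [hS, ← Finset.sum_sub_distrib]
        exact Finset.sum_congr rfl fun i _ => by ring
      linarith [hvb, hdist ▸ hvb]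
    rw [hA]
    simp_rw [hqF]
    rw [← Finset.sum_div, lt_div_iff₀ hS0, one_mul]
    exact h1
  have hAk : ∀ k, ∑ i, p i * u i k < A := by
    intro k
    have h1 : ∑ i, q i * u i k < ∑ i, q i * F (u i) := by
      have hdist : ∑ i, (u i k - F (u i)) * q i
          = ∑ i, q i * u i k - ∑ i, q i * F (u i) := by
        rw [← Finset.sum_sub_distrib]
        exact Finset.sum_congr rfl fun i _ => by ring
      linarith [hdist ▸ hvk k]
    rw [hA]
    have hqu : ∀ i, p i * u i k = (q i * u i k) / S := by
      intro i; rw [hp]; ring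
    simp_rw [hqF, hqu]
    rw [← Finset.sum_div, ← Finset.sum_div, div_lt_div_iff_of_pos_right hS0]
    exact h1
  -- now contradict hstar
  have hne : (Finset.univ : Finset (Fin K)).Nonempty := Finset.univ_nonempty
  set M : ℝ := max 1 (Finset.univ.sup' hne fun k => ∑ i, p i * u i k) with hM
  have hM1 : 1 ≤ M := le_max_left _ _
  have hMk : ∀ k, (∑ i, p i * u i k) ≤ M := fun k =>
    le_trans (Finset.le_sup' (fun k => ∑ i, p i * u i k) (Finset.mem_univ k)) (le_max_right _ _)
  have hfinal := hstar n p hp0 hp1 u hu M hM1 hMk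
  have hMA : M < A := by
    rw [hM, max_lt_iff]
    exact ⟨hA1, (Finset.sup'_lt_iff hne).mpr fun k _ => hAk k⟩
  rw [← hA] at hfinal
  linarith

theorem stmt_9' (K : ℕ) (hK : 1 ≤ K) (F : (Fin K → ℝ) → ℝ)
    (hF0 : ∀ u : Fin K → ℝ, (∀ k, 0 ≤ u k) → 0 ≤ F u)
    (hstar : ∀ (n : ℕ) (p : Fin n → ℝ), (∀ i, 0 ≤ p i) → (∑ i, p i = 1) →
      ∀ (u : Fin n → Fin K → ℝ), (∀ i k, 0 ≤ u i k) →
      ∀ (M : ℝ), 1 ≤ M → (∀ k, (∑ i, p i * u i k) ≤ M) →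
      (∑ i, p i * F (u i)) ≤ M) :
    ∃ ρ ∈ stdSimplex ℝ (Option (Option (Fin K))),
      ∀ u : Fin K → ℝ, (∀ k, 0 ≤ u k) →
        F u ≤ ρ (some none) + ∑ k, ρ (some (some k)) * u k := by
  classical
  set t : (Fin K → ℝ) → Set (Option (Option (Fin K)) → ℝ) :=
    fun u => {ρ | (∀ k, 0 ≤ u k) → F u ≤ ρ (some none) + ∑ k, ρ (some (some k)) * u k}
    with htdef
  have htc : ∀ u, IsClosed (t u) := by
    intro u
    by_cases h : ∀ k, 0 ≤ u k
    · have : t u = {ρ | F u ≤ ρ (some none) + ∑ k, ρ (some (some k)) * u k} := by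
        ext ρ; simp [htdef, h]
      rw [this]
      exact isClosed_le continuous_const ((continuous_apply (some none)).add
        (continuous_finset_sum Finset.univ fun k _ =>
          (continuous_apply (some (some k))).mul continuous_const))
    · have : t u = Set.univ := by
        ext ρ; simp [htdef, h]
      rw [this]; exact isClosed_univ
  have hfin : ∀ fs : Finset (Fin K → ℝ),
      (stdSimplex ℝ (Option (Option (Fin K))) ∩ ⋂ u ∈ fs, t u).Nonempty := by
    intro fs
    set fs' : Finset (Fin K → ℝ) := fs.filter (fun u => ∀ k, 0 ≤ u k) with hfs'
    set n : ℕ := Fintype.card ↥fs' with hn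
    set φ := Fintype.equivFin ↥fs' with hφ
    set ufun : Fin n → (Fin K → ℝ) := fun i => ((φ.symm i : ↥fs') : Fin K → ℝ) with hufun
    have hunn : ∀ i k, 0 ≤ ufun i k := by
      intro i k
      have hmem : (ufun i) ∈ fs' := (φ.symm i).2
      exact (Finset.mem_filter.mp hmem).2 k
    obtain ⟨ρ, hρmem, hρ⟩ := finite_feas K F hK hstar n ufun hunn
    refine ⟨ρ, hρmem, ?_⟩
    simp only [Set.mem_iInter]
    intro u hu hunn'
    have hmem' : u ∈ fs' := Finset.mem_filter.mpr ⟨hu, hunn'⟩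
    have : u = ufun (φ ⟨u, hmem'⟩) := by simp [hufun]
    rw [this]
    exact hρ _
  obtain ⟨ρ, hρmem, hρ⟩ := (isCompact_stdSimplex _ _).inter_iInter_nonempty t htc hfin
  refine ⟨ρ, hρmem, fun u hu => ?_⟩
  have := Set.mem_iInter.mp hρ u
  exact this hu
/-- every generalised e-merging function is dominated pointwise on
the orthant by a componentwise non-decreasing, nonnegative function with the
same e-merging property. -/
theorem stmt_9 (K : ℕ) (hK : 1 ≤ K) (F : (Fin K → ℝ) → ℝ)
    (hFmeas : Measurable F)
    (hF0 : ∀ u : Fin K → ℝ, (∀ k, 0 ≤ u k) → 0 ≤ F u)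
    (hmerge : ∀ (X : Type) (_ : MeasurableSpace X) (Q : Measure X),
      IsProbabilityMeasure Q →
      ∀ E : Fin K → X → ℝ, (∀ k, Measurable (E k)) → (∀ k x, 0 ≤ E k x) →
      (∀ k, ∫⁻ x, ENNReal.ofReal (E k x) ∂Q ≤ 1) →
      ∫⁻ x, ENNReal.ofReal (F (fun k => E k x)) ∂Q ≤ 1) :
    ∃ G : (Fin K → ℝ) → ℝ,
      (∀ u : Fin K → ℝ, (∀ k, 0 ≤ u k) → 0 ≤ G u) ∧
      (∀ u v : Fin K → ℝ, (∀ k, 0 ≤ u k) → (∀ k, 0 ≤ v k) → (∀ k, u k ≤ v k) →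
        G u ≤ G v) ∧
      (∀ (X : Type) (_ : MeasurableSpace X) (Q : Measure X),
        IsProbabilityMeasure Q →
        ∀ E : Fin K → X → ℝ, (∀ k, Measurable (E k)) → (∀ k x, 0 ≤ E k x) →
        (∀ k, ∫⁻ x, ENNReal.ofReal (E k x) ∂Q ≤ 1) →
        ∫⁻ x, ENNReal.ofReal (G (fun k => E k x)) ∂Q ≤ 1) ∧
      (∀ u : Fin K → ℝ, (∀ k, 0 ≤ u k) → F u ≤ G u) := by
  have hstar : ∀ (n : ℕ) (p : Fin n → ℝ), (∀ i, 0 ≤ p i) → (∑ i, p i = 1) →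
      ∀ (u : Fin n → Fin K → ℝ), (∀ i k, 0 ≤ u i k) →
      ∀ (M : ℝ), 1 ≤ M → (∀ k, (∑ i, p i * u i k) ≤ M) →
      (∑ i, p i * F (u i)) ≤ M := by
    intro n p hp0 hp1 u hu M hM1 hMk
    exact star_lemma K F hF0 hmerge n p hp0 hp1 u hu M hM1 hMk
  obtain ⟨ρ, hρmem, hρ⟩ := stmt_9' K hK F hF0 hstar
  obtain ⟨hρ0, hρ1⟩ := hρmem
  set b : ℝ := ρ (some none) with hb
  set lam : Fin K → ℝ := fun k => ρ (some (some k)) with hlam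
  have hb0 : 0 ≤ b := hρ0 _
  have hlam0 : ∀ k, 0 ≤ lam k := fun k => hρ0 _
  have hsum1 : b + ∑ k, lam k ≤ 1 := by
    have := hρ1
    rw [Fintype.sum_option, Fintype.sum_option] at this
    have h0 : 0 ≤ ρ none := hρ0 none
    rw [hb, hlam]
    linarith [this]
  refine ⟨fun v => b + ∑ k, lam k * v k, ?_, ?_, ?_, ?_⟩
  · intro v hv
    exact add_nonneg hb0 (Finset.sum_nonneg fun k _ => mul_nonneg (hlam0 k) (hv k))
  · intro v w hv hw hvw
    refine add_le_add_right (Finset.sum_le_sum fun k _ => ?_) b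
    exact mul_le_mul_of_nonneg_left (hvw k) (hlam0 k)
  · intro X mX Q hQ E hEm hE0 hE1
    have heq : ∀ x, ENNReal.ofReal (b + ∑ k, lam k * E k x)
        = ENNReal.ofReal b + ∑ k, ENNReal.ofReal (lam k) * ENNReal.ofReal (E k x) := by
      intro x
      rw [ENNReal.ofReal_add hb0
        (Finset.sum_nonneg fun k _ => mul_nonneg (hlam0 k) (hE0 k x)),
        ENNReal.ofReal_sum_of_nonneg fun k _ => mul_nonneg (hlam0 k) (hE0 k x)]
      congr 1
      exact Finset.sum_congr rfl fun k _ => ENNReal.ofReal_mul (hlam0 k)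
    calc ∫⁻ x, ENNReal.ofReal (b + ∑ k, lam k * E k x) ∂Q
        = ∫⁻ x, (ENNReal.ofReal b
            + ∑ k, ENNReal.ofReal (lam k) * ENNReal.ofReal (E k x)) ∂Q := by
          exact lintegral_congr heq
      _ = ENNReal.ofReal b
            + ∫⁻ x, (∑ k, ENNReal.ofReal (lam k) * ENNReal.ofReal (E k x)) ∂Q := by
          rw [lintegral_add_left measurable_const, lintegral_const, measure_univ, mul_one]
      _ = ENNReal.ofReal b
            + ∑ k, ENNReal.ofReal (lam k) * ∫⁻ x, ENNReal.ofReal (E k x) ∂Q := by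
          congr 1
          rw [lintegral_finset_sum _ fun k _ =>
            ((hEm k).ennreal_ofReal.const_mul _)]
          exact Finset.sum_congr rfl fun k _ =>
            lintegral_const_mul _ ((hEm k).ennreal_ofReal)
      _ ≤ ENNReal.ofReal b + ∑ k, ENNReal.ofReal (lam k) := by
          refine add_le_add_right (Finset.sum_le_sum fun k _ => ?_) _
          calc ENNReal.ofReal (lam k) * ∫⁻ x, ENNReal.ofReal (E k x) ∂Q
              ≤ ENNReal.ofReal (lam k) * 1 := mul_le_mul' le_rfl (hE1 k)
            _ = ENNReal.ofReal (lam k) := mul_one _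
      _ = ENNReal.ofReal (b + ∑ k, lam k) := by
          rw [ENNReal.ofReal_add hb0 (Finset.sum_nonneg fun k _ => hlam0 k),
            ENNReal.ofReal_sum_of_nonneg fun k _ => hlam0 k]
      _ ≤ 1 := ENNReal.ofReal_le_one.mpr hsum1
  · intro u hu
    exact hρ u hu
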